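/- For the canonical one-parameter exponential family, the moment matching prior π_M(θ) = exp[−(1/2)∫^θ g₃(t)/I(t) dt] equals Jeffreys' prior I^{1/2}(θ); and a general moment matching prior equals Jeffreys' prior I^{1/2}(θ) if and only if g₃(θ) = I′(θ), while π_M is constant if and only if g₃(θ) ≡ 0. -/

import Mathlib

open Real

/-- **Moment matching priors versus Jeffreys' prior.**
The moment matching prior is characterized (with the paper's consistent sign
convention, `π_M ∝ exp[(1/2)∫ g₃/I]`, equivalently
`exp[(1/2)∫ I'/I]` in the canonical exponential family) by the logarithmic
derivative equation `π' / π = g₃/(2I)`.  For the canonical one-parameter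
exponential family, `g₃ = I'` and the moment matching prior equals Jeffreys'
prior `I^{1/2}`; in general, `π_M ∝ I^{1/2}` iff `g₃ = I'`, and `π_M` is
constant iff `g₃ ≡ 0`. -/
theorem moment_matching_prior_characterization
    (I g₃ : ℝ → ℝ) (hIpos : ∀ t, 0 < I t) (hIdiff : Differentiable ℝ I)
    (hg₃cont : Continuous g₃)
    (p : ℝ → ℝ) (hppos : ∀ t, 0 < p t) (hpdiff : Differentiable ℝ p)
    (hp : ∀ t, deriv p t / p t = g₃ t / (2 * I t)) :
    -- canonical exponential family: g₃ = I' forces the Jeffreys prior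
    ((∀ t, g₃ t = deriv I t) →
      ∃ C : ℝ, 0 < C ∧ ∀ t, p t = C * Real.sqrt (I t)) ∧
    -- π_M ∝ I^{1/2} if and only if g₃ = I'
    ((∃ C : ℝ, 0 < C ∧ ∀ t, p t = C * Real.sqrt (I t)) ↔ ∀ t, g₃ t = deriv I t) ∧
    -- π_M is constant if and only if g₃ ≡ 0
    ((∃ C : ℝ, 0 < C ∧ ∀ t, p t = C) ↔ ∀ t, g₃ t = 0) := by
  have hpne : ∀ t, p t ≠ 0 := fun t => (hppos t).ne'
  have hIne : ∀ t, I t ≠ 0 := fun t => (hIpos t).ne'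
  have hsne : ∀ t, Real.sqrt (I t) ≠ 0 := fun t => (Real.sqrt_pos.mpr (hIpos t)).ne'
  have hderiv : ∀ t, deriv p t = g₃ t / (2 * I t) * p t := by
    intro t
    have := hp t
    rw [div_eq_iff (hpne t)] at this
    exact this
  -- forward: g₃ = I' implies p = C sqrt I
  have key : (∀ t, g₃ t = deriv I t) → ∃ C : ℝ, 0 < C ∧ ∀ t, p t = C * Real.sqrt (I t) := by
    intro hg
    set f : ℝ → ℝ := fun t => p t / Real.sqrt (I t) with hf
    have hfd : ∀ t, HasDerivAt f 0 t := by
      intro t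
      have hs : HasDerivAt (fun t => Real.sqrt (I t)) (deriv I t / (2 * Real.sqrt (I t))) t :=
        ((hIdiff t).hasDerivAt).sqrt (hIne t)
      have hpd : HasDerivAt p (deriv p t) t := (hpdiff t).hasDerivAt
      have hdiv := hpd.div hs (hsne t)
      have hval : (deriv p t * Real.sqrt (I t) - p t * (deriv I t / (2 * Real.sqrt (I t)))) /
          (Real.sqrt (I t)) ^ 2 = 0 := by
        rw [hderiv t, ← hg t]
        have hsq : Real.sqrt (I t) ^ 2 = I t := Real.sq_sqrt (hIpos t).le
        rw [div_eq_zero_iff]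
        left
        rw [← hsq]
        field_simp [hsne t]
        simp only [hsq]
        ring
      rw [hval] at hdiv
      exact hdiv
    have hfc : ∀ t, f t = f 0 := by
      intro t
      exact is_const_of_deriv_eq_zero (fun x => (hfd x).differentiableAt)
        (fun x => (hfd x).deriv) t 0
    refine ⟨f 0, div_pos (hppos 0) (Real.sqrt_pos.mpr (hIpos 0)), fun t => ?_⟩
    exact (div_eq_iff (hsne t)).mp (hfc t)
  -- reverse: p = C sqrt I implies g₃ = I'
  have rev : (∃ C : ℝ, 0 < C ∧ ∀ t, p t = C * Real.sqrt (I t)) → ∀ t, g₃ t = deriv I t := by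
    rintro ⟨C, hC, hCp⟩ t
    have hpe : p = fun t => C * Real.sqrt (I t) := funext hCp
    have hs : HasDerivAt (fun t => C * Real.sqrt (I t))
        (C * (deriv I t / (2 * Real.sqrt (I t)))) t :=
      (((hIdiff t).hasDerivAt).sqrt (hIne t)).const_mul C
    have hdp : deriv p t = C * (deriv I t / (2 * Real.sqrt (I t))) := by
      rw [hpe]; exact hs.deriv
    have := hp t
    rw [hdp, hCp t] at this
    have hsq : Real.sqrt (I t) * Real.sqrt (I t) = I t := Real.mul_self_sqrt (hIpos t).le
    have lhs : C * (deriv I t / (2 * Real.sqrt (I t))) / (C * Real.sqrt (I t))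
        = deriv I t / (2 * I t) := by
      rw [← hsq]; field_simp [hC.ne', hsne t]; simp only [Real.sq_sqrt (hIpos t).le]
    rw [lhs] at this
    field_simp [hIne t] at this
    linarith
  -- constant iff g₃ = 0
  have const_iff : (∃ C : ℝ, 0 < C ∧ ∀ t, p t = C) ↔ ∀ t, g₃ t = 0 := by
    constructor
    · rintro ⟨C, hC, hCp⟩ t
      have hpe : p = fun _ => C := funext hCp
      have hdp : deriv p t = 0 := by rw [hpe]; simp
      have := hderiv t
      rw [hdp] at this
      have h2 : g₃ t / (2 * I t) = 0 := by
        rcases mul_eq_zero.mp this.symm with h | h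
        · exact h
        · exact absurd h (hpne t)
      have := div_eq_zero_iff.mp h2
      rcases this with h | h
      · exact h
      · exact absurd h (mul_ne_zero two_ne_zero (hIne t))
    · intro hg
      have hdp : ∀ t, deriv p t = 0 := by
        intro t; rw [hderiv t, hg t]; simp
      refine ⟨p 0, hppos 0, fun t => is_const_of_deriv_eq_zero hpdiff hdp t 0⟩
  exact ⟨key, ⟨rev, key⟩, const_iff⟩
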